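/- Let k ≥ 1, n = k+1, and α ∈ 𝓑. Then for each i with 1 ≤ i ≤ k+1, the multiset of leg lengths l_T(x) over cells x of p(T) with arm length a_T(x) = i−1 equals the disjoint union of the multiset of leg lengths l_D(x) over cells x of q(D) with arm length a_D(x) = i−1 and the multiset {0, 1, …, i−2} (which is empty when i = 1). -/

import Mathlib

/-- The skew diagram with rows `a,…,b`, where row `i` contains the cells
`(i,j)` for `lo i ≤ j ≤ hi i`. -/
def skewD (a b : ℕ) (lo hi : ℕ → ℕ) : Finset (ℕ × ℕ) :=
  (Finset.Icc a b).biUnion fun i => (Finset.Icc (lo i) (hi i)).image fun j => (i, j)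

/-- Arm length: number of cells of `G` in the same row, strictly to the right. -/
def arm (G : Finset (ℕ × ℕ)) (x : ℕ × ℕ) : ℕ :=
  (G.filter fun y => y.1 = x.1 ∧ x.2 < y.2).card

/-- Leg length: number of cells of `G` in the same column, strictly below
(rows are numbered bottom to top). -/
def leg (G : Finset (ℕ × ℕ)) (x : ℕ × ℕ) : ℕ :=
  (G.filter fun y => y.2 = x.2 ∧ y.1 < x.1).card

/-- Multiset of arm–leg pairs of the cells of `E`, computed in `G`. -/
def AL (G E : Finset (ℕ × ℕ)) : Multiset (ℕ × ℕ) :=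
  E.val.map fun x => (arm G x, leg G x)

/-- Multiset of hook lengths of `G`. -/
def hookMS (G : Finset (ℕ × ℕ)) : Multiset ℕ :=
  G.val.map fun x => arm G x + leg G x + 1

/-- The skew diagram `T`. -/
def TT (n k : ℕ) (α : ℕ → ℕ) : Finset (ℕ × ℕ) :=
  skewD 1 k (fun i => α 1 - α i + 1) (fun i => n + α 1 - α i)

/-- The skew diagram `V`. -/
def VV (n k : ℕ) (α : ℕ → ℕ) : Finset (ℕ × ℕ) :=
  skewD (k + 1) (2 * k) (fun i => n + α 1 - α (i - k) + 1) (fun _ => n + α 1)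

/-- The skew diagram `SQ = T ∪ V`. -/
def SQ (n k : ℕ) (α : ℕ → ℕ) : Finset (ℕ × ℕ) :=
  TT n k α ∪ VV n k α

/-- The `k × n` rectangle `R`. -/
def RR (n k : ℕ) : Finset (ℕ × ℕ) :=
  skewD 1 k (fun _ => 1) (fun _ => n)

/-- The Young diagram `D` of `α`. -/
def DD (k : ℕ) (α : ℕ → ℕ) : Finset (ℕ × ℕ) :=
  skewD 1 k (fun _ => 1) (fun i => α (k + 1 - i))

/-- The 180° rotation `T*` of `T`. -/
def Tstar (n k : ℕ) (α : ℕ → ℕ) : Finset (ℕ × ℕ) :=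
  skewD 1 k (fun i => α (k + 1 - i) - α k + 1) (fun i => n + α (k + 1 - i) - α k)

/-- `α` has Frobenius form `(λ₁,…,λ_m | λ₁−1,…,λ_m−1)` with
`k ≥ λ₁ > ⋯ > λ_m > 0`: equivalently `α_j = λ_j + j` for `1 ≤ j ≤ m`,
`α_j ≤ m` for `m < j ≤ k`, and the conjugate partition satisfies
`α′_j = λ_j + j − 1` for `1 ≤ j ≤ m`. -/
def FrobB (k : ℕ) (α : ℕ → ℕ) (m : ℕ) (lam : ℕ → ℕ) : Prop :=
  (∀ j, 1 ≤ j → j ≤ m → 0 < lam j ∧ lam j ≤ k) ∧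
  (∀ j j', 1 ≤ j → j < j' → j' ≤ m → lam j' < lam j) ∧
  (∀ j, 1 ≤ j → j ≤ m → α j = lam j + j) ∧
  (∀ j, m < j → j ≤ k → α j ≤ m) ∧
  (∀ j, 1 ≤ j → j ≤ m →
    ((Finset.Icc 1 k).filter fun i => j ≤ α i).card = lam j + j - 1)

/-- `α ∈ 𝓑`. -/
def memB (k : ℕ) (α : ℕ → ℕ) : Prop := ∃ m lam, FrobB k α m lam


/-- A down-closed filter of `Icc 1 k` is an initial segment. -/
lemma down_filter {k : ℕ} {p : ℕ → Prop} [DecidablePred p]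
    (hd : ∀ r r', 1 ≤ r → r ≤ r' → r' ≤ k → p r' → p r) :
    (Finset.Icc 1 k).filter p = Finset.Icc 1 ((Finset.Icc 1 k).filter p).card := by
  have hcardk : ((Finset.Icc 1 k).filter p).card ≤ k := by
    calc ((Finset.Icc 1 k).filter p).card ≤ (Finset.Icc 1 k).card :=
        Finset.card_le_card (Finset.filter_subset _ _)
    _ = k := by simp
  ext x
  simp only [Finset.mem_filter, Finset.mem_Icc]
  constructor
  · rintro ⟨⟨hx1, hxk⟩, hpx⟩
    refine ⟨hx1, ?_⟩
    have hsub : Finset.Icc 1 x ⊆ (Finset.Icc 1 k).filter p := by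
      intro y hy
      simp only [Finset.mem_Icc] at hy
      simp only [Finset.mem_filter, Finset.mem_Icc]
      exact ⟨⟨hy.1, le_trans hy.2 hxk⟩, hd y x hy.1 hy.2 hxk hpx⟩
    have := Finset.card_le_card hsub
    simpa using this
  · rintro ⟨hx1, hxc⟩
    have hxk : x ≤ k := le_trans hxc hcardk
    refine ⟨⟨hx1, hxk⟩, ?_⟩
    by_contra hnp
    have hsub : (Finset.Icc 1 k).filter p ⊆ Finset.Icc 1 (x - 1) := by
      intro y hy
      simp only [Finset.mem_filter, Finset.mem_Icc] at hy
      simp only [Finset.mem_Icc]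
      refine ⟨hy.1.1, ?_⟩
      by_contra hlt
      push_neg at hlt
      exact hnp (hd x y hx1 (by omega) hy.1.2 hy.2)
    have := Finset.card_le_card hsub
    simp only [Nat.card_Icc] at this
    omega

section Core
variable {k : ℕ} {α : ℕ → ℕ} {m : ℕ} {lam : ℕ → ℕ}

/-- number of rows with `α ≥ c` -/
def fval (k : ℕ) (α : ℕ → ℕ) (c : ℕ) : ℕ :=
  ((Finset.Icc 1 k).filter fun ρ => c ≤ α ρ).card

lemma fval_le_k : fval k α c ≤ k := by
  calc fval k α c ≤ (Finset.Icc 1 k).card :=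
      Finset.card_le_card (Finset.filter_subset _ _)
  _ = k := by simp

lemma conj_iff (hmono : ∀ i j, 1 ≤ i → i ≤ j → j ≤ k → α j ≤ α i)
    {c r : ℕ} (hc : 1 ≤ c) (hr : 1 ≤ r) (hrk : r ≤ k) :
    c ≤ α r ↔ r ≤ fval k α c := by
  have hdf := down_filter (k := k) (p := fun ρ => c ≤ α ρ)
    (fun a b ha hab hbk hpb => le_trans hpb (hmono a b ha hab hbk))
  constructor
  · intro h
    have : r ∈ (Finset.Icc 1 k).filter fun ρ => c ≤ α ρ := by
      simp [Finset.mem_filter, Finset.mem_Icc, hr, hrk, h]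
    rw [hdf] at this
    simp only [Finset.mem_Icc] at this
    exact this.2
  · intro h
    have : r ∈ Finset.Icc 1 (fval k α c) := by simp [Finset.mem_Icc, hr, h]
    rw [show Finset.Icc 1 (fval k α c) = (Finset.Icc 1 k).filter fun ρ => c ≤ α ρ from hdf.symm] at this
    exact (Finset.mem_filter.mp this).2

variable (hF : FrobB k α m lam)
include hF

lemma row_le_m {r : ℕ} (hr : 1 ≤ r) (hrk : r ≤ k) (h : r ≤ α r) : r ≤ m := by
  by_contra hc
  have := hF.2.2.2.1 r (by omega) hrk
  omega

lemma m_le_k (hm : 1 ≤ m) : m ≤ k := by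
  have h1 := (hF.1 m hm le_rfl).1
  have h5 := hF.2.2.2.2 m hm le_rfl
  have : fval k α m = lam m + m - 1 := h5
  have := fval_le_k (k := k) (α := α) (c := m)
  omega

/-- `-lam c` is never a `b`-value. -/
lemma no_neg_lam (hmono : ∀ i j, 1 ≤ i → i ≤ j → j ≤ k → α j ≤ α i)
    {c ρ : ℕ} (hc : 1 ≤ c) (hcm : c ≤ m) (hρ : 1 ≤ ρ) (hρk : ρ ≤ k) :
    α ρ + lam c ≠ ρ := by
  intro heq
  have h1 := (hF.1 c hc hcm).1
  have h5 : fval k α c = lam c + c - 1 := hF.2.2.2.2 c hc hcm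
  have hiff := conj_iff hmono hc hρ hρk
  rcases le_or_gt c (α ρ) with h | h
  · have := hiff.mp h; omega
  · have : ¬ (ρ ≤ fval k α c) := fun hh => by have := hiff.mpr hh; omega
    omega

/-- If `j ≥ 1` is not a `lam`-value and some row has `b < -j`, then `-j` is a `b`-value. -/
lemma neg_present (hmono : ∀ i j, 1 ≤ i → i ≤ j → j ≤ k → α j ≤ α i)
    {j s' : ℕ} (hj : 1 ≤ j) (habs : ∀ c, 1 ≤ c → c ≤ m → lam c ≠ j)
    (hs'k : s' ≤ k) (hw : α s' + j < s') :
    ∃ r, 1 ≤ r ∧ r ≤ k ∧ α r + j = r := by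
  classical
  set W := (Finset.Icc 1 k).filter (fun ρ => ρ ≤ α ρ + j) with hW
  have hdW : W = Finset.Icc 1 W.card := by
    apply down_filter
    intro a b ha hab hbk hpb
    have := hmono a b ha hab hbk
    omega
  set g := W.card with hg
  have hk1 : 1 ≤ k := le_trans (by omega) hs'k
  have h1W : (1 : ℕ) ∈ W := by
    simp only [hW, Finset.mem_filter, Finset.mem_Icc]
    omega
  have hg1 : 1 ≤ g := by
    rw [hdW] at h1W; simp only [Finset.mem_Icc] at h1W; omega
  have hs'W : s' ∉ W := by
    simp only [hW, Finset.mem_filter, Finset.mem_Icc]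
    push_neg
    intro _
    omega
  have hgs' : g < s' := by
    by_contra hc
    push_neg at hc
    exact hs'W (by rw [hdW]; simp only [Finset.mem_Icc]; omega)
  have hgk : g ≤ k := by omega
  have hgW : g ∈ W := by rw [hdW]; simp only [Finset.mem_Icc]; omega
  have hgle : g ≤ α g + j := by
    have := hgW
    simp only [hW, Finset.mem_filter, Finset.mem_Icc] at this
    exact this.2
  refine ⟨g, hg1, hgk, ?_⟩
  by_contra hne
  have hglt : g + 1 ≤ α g + j := by omega
  have hg1W : g + 1 ∉ W := by
    rw [hdW]; simp only [Finset.mem_Icc]; omega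
  have hg1k : g + 1 ≤ k := by omega
  have hg1lt : α (g+1) + j ≤ g := by
    simp only [hW, Finset.mem_filter, Finset.mem_Icc] at hg1W
    push_neg at hg1W
    have := hg1W ⟨by omega, hg1k⟩
    omega
  have hjg : j ≤ g := by
    have : 0 ≤ α (g+1) := Nat.zero_le _
    omega
  set c := g + 1 - j with hc
  have hc1 : 1 ≤ c := by omega
  have hck : c ≤ k := by omega
  -- f c = g
  have hfg : g ≤ fval k α c := by
    have := (conj_iff hmono hc1 hg1 hgk).mp (by omega)
    omega
  have hfg2 : fval k α c ≤ g := by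
    by_contra hcon
    push_neg at hcon
    have := (conj_iff hmono hc1 (r := g+1) (by omega) hg1k).mpr (by omega)
    omega
  have hfc : fval k α c = g := le_antisymm hfg2 hfg
  have hcαc : c ≤ α c := by
    have := (conj_iff hmono hc1 hc1 hck).mpr (by omega)
    exact this
  have hcm : c ≤ m := row_le_m hF hc1 hck hcαc
  have h5 : fval k α c = lam c + c - 1 := hF.2.2.2.2 c hc1 hcm
  have h1 := (hF.1 c hc1 hcm).1
  exact habs c hc1 hcm (by omega)

end Core

section IntPart
variable {k : ℕ} {α : ℕ → ℕ} {m : ℕ} {lam : ℕ → ℕ}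

/-- the content/beta value of a row as an integer -/
def Bf (α : ℕ → ℕ) (r : ℕ) : ℤ := (α r : ℤ) - r

lemma strictB (hmono : ∀ i j, 1 ≤ i → i ≤ j → j ≤ k → α j ≤ α i)
    {p q : ℕ} (hp : 1 ≤ p) (hpq : p < q) (hqk : q ≤ k) : Bf α q < Bf α p := by
  have := hmono p q hp (by omega) hqk
  simp only [Bf]
  omega

lemma cardIP (hmono : ∀ i j, 1 ≤ i → i ≤ j → j ≤ k → α j ≤ α i)
    {s d : ℕ} (hs : 1 ≤ s) (hd : 1 ≤ d) (hsd : s + d ≤ k) :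
    ((Finset.Ioo (Bf α (s+d)) (Bf α s)) \ ((Finset.Ioo s (s+d)).image (Bf α))).card
      + α (s+d) = α s := by
  classical
  have hPI : (Finset.Ioo s (s+d)).image (Bf α) ⊆ Finset.Ioo (Bf α (s+d)) (Bf α s) := by
    intro x hx
    simp only [Finset.mem_image, Finset.mem_Ioo] at hx ⊢
    obtain ⟨ρ, ⟨hρ1, hρ2⟩, rfl⟩ := hx
    exact ⟨strictB hmono (by omega) hρ2 hsd, strictB hmono hs hρ1 (by omega)⟩
  have hinj : Set.InjOn (Bf α) (Finset.Ioo s (s+d)) := by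
    intro a ha b hb hab
    simp only [Finset.coe_Ioo, Set.mem_Ioo] at ha hb
    by_contra hne
    rcases Nat.lt_or_ge a b with h | h
    · have := strictB hmono (p := a) (q := b) (by omega) h (by omega)
      omega
    · have hlt : b < a := by omega
      have := strictB hmono (p := b) (q := a) (by omega) hlt (by omega)
      omega
  have hcardP : ((Finset.Ioo s (s+d)).image (Bf α)).card = d - 1 := by
    rw [Finset.card_image_of_injOn hinj, Nat.card_Ioo]
    omega
  have hcardI : (Finset.Ioo (Bf α (s+d)) (Bf α s)).card
      = (Bf α s - Bf α (s+d) - 1).toNat := Int.card_Ioo _ _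
  rw [Finset.card_sdiff_of_subset hPI, hcardP, hcardI]
  have hmle := hmono s (s+d) hs (by omega) hsd
  simp only [Bf]
  omega

variable (hF : FrobB k α m lam)
include hF

lemma zero_not_b {ρ : ℕ} (hρ : 1 ≤ ρ) (hρk : ρ ≤ k) : α ρ ≠ ρ := by
  intro h
  have hm := row_le_m hF hρ hρk (le_of_eq h.symm)
  have h3 := hF.2.2.1 ρ hρ hm
  have h1 := (hF.1 ρ hρ hm).1
  omega

lemma pos_present {r j : ℕ} (hj : 1 ≤ j) (hr : 1 ≤ r) (hrk : r ≤ k)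
    (h : α r = r + j) : r ≤ m ∧ lam r = j := by
  have hm := row_le_m hF hr hrk (by omega)
  have h3 := hF.2.2.1 r hr hm
  exact ⟨hm, by omega⟩

/-- key exclusion: `j` and `-j` cannot both be missing (within the window). -/
lemma key_pair (hmono : ∀ i j, 1 ≤ i → i ≤ j → j ≤ k → α j ≤ α i)
    {s d j : ℕ} (hs : 1 ≤ s) (hd : 1 ≤ d) (hsd : s + d ≤ k) (hj : 1 ≤ j)
    (hpos : (j : ℤ) ∈ Finset.Ioo (Bf α (s+d)) (Bf α s) \ ((Finset.Ioo s (s+d)).image (Bf α)))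
    (hneg : (-(j:ℤ)) ∈ Finset.Ioo (Bf α (s+d)) (Bf α s) \ ((Finset.Ioo s (s+d)).image (Bf α))) :
    False := by
  classical
  have hposI := (Finset.mem_sdiff.mp hpos).1
  have hposP := (Finset.mem_sdiff.mp hpos).2
  have hnegI := (Finset.mem_sdiff.mp hneg).1
  have hnegP := (Finset.mem_sdiff.mp hneg).2
  simp only [Finset.mem_Ioo] at hposI hnegI
  -- membership of a b-value in the interval forces the row into (s, s+d)
  have hrow : ∀ r, 1 ≤ r → r ≤ k → Bf α (s+d) < Bf α r → Bf α r < Bf α s →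
      s < r ∧ r < s + d := by
    intro r hr1 hrk hlow hhigh
    constructor
    · by_contra hc
      push_neg at hc
      rcases Nat.lt_or_ge r s with h | h
      · have := strictB hmono hr1 h (by omega); omega
      · have : r = s := by omega
        subst this; omega
    · by_contra hc
      push_neg at hc
      rcases Nat.lt_or_ge (s+d) r with h | h
      · have := strictB hmono (by omega) h hrk; omega
      · have : r = s + d := by omega
        subst this; omega
  have habs : ∀ c, 1 ≤ c → c ≤ m → lam c ≠ j := by
    intro c hc1 hcm hlam
    have h3 := hF.2.2.1 c hc1 hcm
    have hck : c ≤ k := le_trans hcm (m_le_k hF (by omega))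
    have hBc : Bf α c = (j : ℤ) := by simp only [Bf]; omega
    have hrange := hrow c hc1 hck (by rw [hBc]; exact hposI.1) (by rw [hBc]; exact hposI.2)
    exact hposP (Finset.mem_image.mpr ⟨c, by simp only [Finset.mem_Ioo]; omega, hBc⟩)
  have hw : α (s+d) + j < s + d := by
    have := hnegI.1
    simp only [Bf] at this
    omega
  obtain ⟨r, hr1, hrk, hreq⟩ := neg_present hF hmono hj habs hsd hw
  have hBr : Bf α r = -(j:ℤ) := by simp only [Bf]; omega
  have hrange := hrow r hr1 hrk (by rw [hBr]; exact hnegI.1) (by rw [hBr]; exact hnegI.2)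
  exact hnegP (Finset.mem_image.mpr ⟨r, by simp only [Finset.mem_Ioo]; omega, hBr⟩)

/-- Fact (A2): in the middle band the difference is small. -/
lemma factA2 (hmono : ∀ i j, 1 ≤ i → i ≤ j → j ≤ k → α j ≤ α i) {i s d : ℕ}
    (hs : 1 ≤ s) (hd : 1 ≤ d) (hsd : s + d ≤ k)
    (hQ : s + d < α (s+d) + i) (hnP2 : α s < s + i) :
    α s < α (s+d) + i := by
  classical
  by_contra hC
  push_neg at hC
  set IP := Finset.Ioo (Bf α (s+d)) (Bf α s) \ ((Finset.Ioo s (s+d)).image (Bf α)) with hIP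
  have hcard := cardIP hmono hs hd hsd
  rw [← hIP] at hcard
  have hI : i ≤ IP.card := by omega
  have hle : IP.card ≤ (Finset.range (i-1)).card := by
    apply Finset.card_le_card_of_injOn (fun w : ℤ => w.natAbs)
    · intro w hw
      have hw' := hw
      rw [hIP] at hw'
      simp only [Finset.mem_coe, Finset.mem_sdiff, Finset.mem_Ioo] at hw'
      have h1 : Bf α s ≤ (i:ℤ) - 1 := by simp only [Bf]; omega
      have h2 : (1:ℤ) - i ≤ Bf α (s+d) := by simp only [Bf]; omega
      simp only [Finset.mem_coe, Finset.mem_range]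
      omega
    · intro w hw w' hw' hww'
      simp only at hww'
      by_contra hne
      have hj : 1 ≤ w.natAbs := by omega
      have hcases : ((w.natAbs : ℤ) = w ∧ -(w.natAbs:ℤ) = w') ∨
          ((w.natAbs:ℤ) = w' ∧ -(w.natAbs:ℤ) = w) := by omega
      rcases hcases with ⟨h1, h2⟩ | ⟨h1, h2⟩
      · exact key_pair hF hmono hs hd hsd hj (by rw [h1]; exact hw) (by rw [h2]; exact hw')
      · exact key_pair hF hmono hs hd hsd hj (by rw [h1]; exact hw') (by rw [h2]; exact hw)
  simp only [Finset.card_range] at hle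
  omega

/-- Fact (B): crossing the band, the difference is at least `i`. -/
lemma factB (hmono : ∀ i j, 1 ≤ i → i ≤ j → j ≤ k → α j ≤ α i) {i s d : ℕ}
    (hs : 1 ≤ s) (hd : 1 ≤ d) (hsd : s + d ≤ k)
    (hP2 : s + i ≤ α s) (hnQ : α (s+d) + i ≤ s + d) :
    α (s+d) + i ≤ α s := by
  classical
  set IP := Finset.Ioo (Bf α (s+d)) (Bf α s) \ ((Finset.Ioo s (s+d)).image (Bf α)) with hIP
  have hcard := cardIP hmono hs hd hsd
  rw [← hIP] at hcard
  have hBs : (i:ℤ) ≤ Bf α s := by simp only [Bf]; omega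
  have hBsd : Bf α (s+d) ≤ -(i:ℤ) := by simp only [Bf]; omega
  have main : ∀ j : ℕ, ∃ x : ℤ, j < i → (x.natAbs = j ∧ x ∈ IP) := by
    intro j
    by_cases hex : ∃ ρ ∈ Finset.Icc 1 k, α ρ = ρ + j
    · refine ⟨-(j:ℤ), fun hj => ⟨by omega, ?_⟩⟩
      rw [hIP]
      simp only [Finset.mem_sdiff, Finset.mem_Ioo, Finset.mem_image, not_exists]
      refine ⟨⟨by omega, by omega⟩, ?_⟩
      rintro ρ ⟨hρ, hBρ⟩
      have hBρ2 : (α ρ : ℤ) - ρ = -(j:ℤ) := hBρ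
      have hρ1 : 1 ≤ ρ := by omega
      have hρk : ρ ≤ k := by omega
      have hρeq : α ρ + j = ρ := by omega
      obtain ⟨r, hrmem, hreq⟩ := hex
      simp only [Finset.mem_Icc] at hrmem
      rcases Nat.eq_zero_or_pos j with rfl | hjpos
      · exact zero_not_b hF hρ1 hρk (by omega)
      · obtain ⟨hrm, hlamr⟩ := pos_present hF hjpos hrmem.1 hrmem.2 hreq
        exact no_neg_lam hF hmono hrmem.1 hrm hρ1 hρk (by omega)
    · refine ⟨(j:ℤ), fun hj => ⟨by omega, ?_⟩⟩
      rw [hIP]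
      simp only [Finset.mem_sdiff, Finset.mem_Ioo, Finset.mem_image, not_exists]
      refine ⟨⟨by omega, by omega⟩, ?_⟩
      rintro ρ ⟨hρ, hBρ⟩
      have hBρ2 : (α ρ : ℤ) - ρ = (j:ℤ) := hBρ
      exact hex ⟨ρ, by simp only [Finset.mem_Icc]; omega, by omega⟩
  choose φ hφ using main
  have hge : (Finset.range i).card ≤ IP.card := by
    apply Finset.card_le_card_of_injOn φ
    · intro j hj
      simp only [Finset.mem_coe, Finset.mem_range] at hj
      exact (hφ j hj).2
    · intro a ha b hb hab
      simp only [Finset.mem_coe, Finset.mem_range] at ha hb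
      have h1 := (hφ a ha).1
      have h2 := (hφ b hb).1
      rw [hab] at h1
      omega
  simp only [Finset.card_range] at hge
  omega

end IntPart

section Count
variable {k : ℕ} {α : ℕ → ℕ} {m : ℕ} {lam : ℕ → ℕ}

def legTval (k : ℕ) (α : ℕ → ℕ) (i r : ℕ) : ℕ :=
  ((Finset.Icc 1 k).filter fun r' => r' < r ∧ α r' < α r + i).card

def legDval (k : ℕ) (α : ℕ → ℕ) (i s : ℕ) : ℕ :=
  ((Finset.Icc 1 k).filter fun s' => s < s' ∧ α s < α s' + i).card

def ATset (k : ℕ) (α : ℕ → ℕ) (i : ℕ) : Finset ℕ :=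
  (Finset.Icc 1 k).filter fun r => r < α r + i

def BDset (k : ℕ) (α : ℕ → ℕ) (i : ℕ) : Finset ℕ :=
  (Finset.Icc 1 k).filter fun s => s + i ≤ α s

lemma ATset_eq (hmono : ∀ i j, 1 ≤ i → i ≤ j → j ≤ k → α j ≤ α i) (i : ℕ) :
    ATset k α i = Finset.Icc 1 (ATset k α i).card := by
  apply down_filter
  intro a b ha hab hbk hpb
  have := hmono a b ha hab hbk
  omega

lemma BDset_eq (hmono : ∀ i j, 1 ≤ i → i ≤ j → j ≤ k → α j ≤ α i) (i : ℕ) :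
    BDset k α i = Finset.Icc 1 (BDset k α i).card := by
  apply down_filter
  intro a b ha hab hbk hpb
  have := hmono a b ha hab hbk
  omega

lemma ATcard_le (i : ℕ) : (ATset k α i).card ≤ k := by
  calc (ATset k α i).card ≤ (Finset.Icc 1 k).card :=
    Finset.card_le_card (Finset.filter_subset _ _)
  _ = k := by simp

lemma BDcard_le (i : ℕ) : (BDset k α i).card ≤ k := by
  calc (BDset k α i).card ≤ (Finset.Icc 1 k).card :=
    Finset.card_le_card (Finset.filter_subset _ _)
  _ = k := by simp

lemma mem_AT_iff (hmono : ∀ i j, 1 ≤ i → i ≤ j → j ≤ k → α j ≤ α i) {i x : ℕ}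
    (hx : 1 ≤ x) (hxk : x ≤ k) : x < α x + i ↔ x ≤ (ATset k α i).card := by
  constructor
  · intro h
    have hmem : x ∈ ATset k α i := by
      simp only [ATset, Finset.mem_filter, Finset.mem_Icc]; exact ⟨⟨hx, hxk⟩, h⟩
    rw [ATset_eq hmono] at hmem
    simp only [Finset.mem_Icc] at hmem
    exact hmem.2
  · intro h
    have hmem : x ∈ ATset k α i := by
      rw [ATset_eq hmono]
      simp only [Finset.mem_Icc]; exact ⟨hx, h⟩
    simp only [ATset, Finset.mem_filter, Finset.mem_Icc] at hmem
    exact hmem.2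

lemma mem_BD_iff (hmono : ∀ i j, 1 ≤ i → i ≤ j → j ≤ k → α j ≤ α i) {i x : ℕ}
    (hx : 1 ≤ x) (hxk : x ≤ k) : x + i ≤ α x ↔ x ≤ (BDset k α i).card := by
  constructor
  · intro h
    have hmem : x ∈ BDset k α i := by
      simp only [BDset, Finset.mem_filter, Finset.mem_Icc]; exact ⟨⟨hx, hxk⟩, h⟩
    rw [BDset_eq hmono] at hmem
    simp only [Finset.mem_Icc] at hmem
    exact hmem.2
  · intro h
    have hmem : x ∈ BDset k α i := by
      rw [BDset_eq hmono]
      simp only [Finset.mem_Icc]; exact ⟨hx, h⟩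
    simp only [BDset, Finset.mem_filter, Finset.mem_Icc] at hmem
    exact hmem.2

lemma Tthr (hmono : ∀ i j, 1 ≤ i → i ≤ j → j ≤ k → α j ≤ α i) {i r d : ℕ}
    (hd : 1 ≤ d) (hrk : r ≤ k) :
    d ≤ legTval k α i r ↔ (d < r ∧ α (r - d) < α r + i) := by
  constructor
  · intro hleg
    have hsub1 : ((Finset.Icc 1 k).filter fun r' => r' < r ∧ α r' < α r + i)
        ⊆ Finset.Icc 1 (r - 1) := by
      intro y hy
      simp only [Finset.mem_filter, Finset.mem_Icc] at hy
      simp only [Finset.mem_Icc]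
      omega
    have h1 := Finset.card_le_card hsub1
    simp only [Nat.card_Icc] at h1
    have hdr : d < r := by
      unfold legTval at hleg
      omega
    refine ⟨hdr, ?_⟩
    by_contra hcon
    push_neg at hcon
    have hsub2 : ((Finset.Icc 1 k).filter fun r' => r' < r ∧ α r' < α r + i)
        ⊆ Finset.Icc (r - d + 1) (r - 1) := by
      intro y hy
      simp only [Finset.mem_filter, Finset.mem_Icc] at hy
      simp only [Finset.mem_Icc]
      refine ⟨?_, by omega⟩
      by_contra hyle
      push_neg at hyle
      have := hmono y (r - d) hy.1.1 (by omega) (by omega)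
      omega
    have h2 := Finset.card_le_card hsub2
    simp only [Nat.card_Icc] at h2
    unfold legTval at hleg
    omega
  · rintro ⟨hdr, hα⟩
    have hsub : Finset.Icc (r - d) (r - 1)
        ⊆ (Finset.Icc 1 k).filter fun r' => r' < r ∧ α r' < α r + i := by
      intro y hy
      simp only [Finset.mem_Icc] at hy
      simp only [Finset.mem_filter, Finset.mem_Icc]
      have := hmono (r - d) y (by omega) hy.1 (by omega)
      refine ⟨⟨by omega, by omega⟩, by omega, by omega⟩
    have := Finset.card_le_card hsub
    simp only [Nat.card_Icc] at this
    unfold legTval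
    omega

lemma Dthr (hmono : ∀ i j, 1 ≤ i → i ≤ j → j ≤ k → α j ≤ α i) {i s d : ℕ}
    (hd : 1 ≤ d) (hs : 1 ≤ s) :
    d ≤ legDval k α i s ↔ (s + d ≤ k ∧ α s < α (s + d) + i) := by
  constructor
  · intro hleg
    have hsub1 : ((Finset.Icc 1 k).filter fun s' => s < s' ∧ α s < α s' + i)
        ⊆ Finset.Icc (s+1) k := by
      intro y hy
      simp only [Finset.mem_filter, Finset.mem_Icc] at hy
      simp only [Finset.mem_Icc]
      omega
    have h1 := Finset.card_le_card hsub1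
    simp only [Nat.card_Icc] at h1
    have hsd : s + d ≤ k := by
      unfold legDval at hleg
      omega
    refine ⟨hsd, ?_⟩
    by_contra hcon
    push_neg at hcon
    have hsub2 : ((Finset.Icc 1 k).filter fun s' => s < s' ∧ α s < α s' + i)
        ⊆ Finset.Icc (s + 1) (s + d - 1) := by
      intro y hy
      simp only [Finset.mem_filter, Finset.mem_Icc] at hy
      simp only [Finset.mem_Icc]
      refine ⟨by omega, ?_⟩
      by_contra hyge
      push_neg at hyge
      have := hmono (s + d) y (by omega) (by omega) hy.1.2
      omega
    have h2 := Finset.card_le_card hsub2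
    simp only [Nat.card_Icc] at h2
    unfold legDval at hleg
    omega
  · rintro ⟨hsd, hα⟩
    have hsub : Finset.Icc (s + 1) (s + d)
        ⊆ (Finset.Icc 1 k).filter fun s' => s < s' ∧ α s < α s' + i := by
      intro y hy
      simp only [Finset.mem_Icc] at hy
      simp only [Finset.mem_filter, Finset.mem_Icc]
      have := hmono y (s + d) (by omega) hy.2 hsd
      refine ⟨⟨by omega, by omega⟩, by omega, by omega⟩
    have := Finset.card_le_card hsub
    simp only [Nat.card_Icc] at this
    unfold legDval
    omega

variable (hF : FrobB k α m lam)
include hF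

/-- `R = t + i - 1`. -/
lemma Rt_eq (hmono : ∀ i j, 1 ≤ i → i ≤ j → j ≤ k → α j ≤ α i) {i : ℕ}
    (hi1 : 1 ≤ i) (hik : i ≤ k + 1) :
    (ATset k α i).card + 1 = (BDset k α i).card + i := by
  set R := (ATset k α i).card with hR
  set t := (BDset k α i).card with ht
  have hRk : R ≤ k := ATcard_le i
  have htk : t ≤ k := BDcard_le i
  -- first: R + 1 ≤ t + i
  have hle : R + 1 ≤ t + i := by
    by_contra hcon
    push_neg at hcon
    have htik : t + i ≤ k := by omega
    have hQti : t + i < α (t + i) + i := by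
      rw [mem_AT_iff hmono (by omega) htik]
      omega
    have hαti : t + 1 ≤ α (t + i) := by omega
    have hnP2 : α (t + 1) < t + 1 + i := by
      by_contra hc
      push_neg at hc
      have hc2 : (t+1) + i ≤ α (t+1) := by omega
      have := (mem_BD_iff hmono (x := t+1) (show 1 ≤ t+1 by omega) (show t+1 ≤ k by omega)).mp hc2
      omega
    rcases Nat.lt_or_ge (α (t+1)) (t+1) with hcase | hcase
    · have := hmono (t+1) (t+i) (by omega) (by omega) htik
      omega
    · have hm1 : t + 1 ≤ m := row_le_m hF (by omega) (by omega) hcase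
      have h3 := hF.2.2.1 (t+1) (by omega) hm1
      have h5 : fval k α (t+1) = lam (t+1) + (t+1) - 1 := hF.2.2.2.2 (t+1) (by omega) hm1
      have h1 := (hF.1 (t+1) (by omega) hm1).1
      have hconj := (conj_iff hmono (c := t+1) (r := t+i) (by omega) (by omega) htik).mp hαti
      omega
  -- second: t + i ≤ R + 1
  have hge : t + i ≤ R + 1 := by
    rcases Nat.eq_zero_or_pos t with ht0 | htpos
    · rcases Nat.lt_or_ge i 2 with hi2 | hi2
      · omega
      · -- show i - 1 ∈ ATset
        have : i - 1 < α (i - 1) + i := by omega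
        have := (mem_AT_iff hmono (x := i - 1) (by omega) (by omega)).mp this
        omega
    · have htBD : t + i ≤ α t := (mem_BD_iff hmono htpos htk).mpr le_rfl
      have htm : t ≤ m := row_le_m hF htpos htk (by omega)
      have h3 := hF.2.2.1 t htpos htm
      have h5 : fval k α t = lam t + t - 1 := hF.2.2.2.2 t htpos htm
      have h1 := (hF.1 t htpos htm).1
      have hfk : fval k α t ≤ k := fval_le_k
      have hek : t + i - 1 ≤ k := by omega
      have hαe : t ≤ α (t + i - 1) := by
        rw [conj_iff hmono htpos (by omega) hek]
        omega
      have : t + i - 1 < α (t + i - 1) + i := by omega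
      have := (mem_AT_iff hmono (x := t + i - 1) (by omega) hek).mp this
      omega
  omega

end Count

section Master
variable {k : ℕ} {α : ℕ → ℕ} {m : ℕ} {lam : ℕ → ℕ}

def CTc (k : ℕ) (α : ℕ → ℕ) (i d : ℕ) : ℕ :=
  ((Finset.Icc 1 k).filter fun r => (r < α r + i) ∧ d ≤ legTval k α i r).card

def CDc (k : ℕ) (α : ℕ → ℕ) (i d : ℕ) : ℕ :=
  ((Finset.Icc 1 k).filter fun s => (s + i ≤ α s) ∧ d ≤ legDval k α i s).card

variable (hF : FrobB k α m lam)
include hF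

lemma master (hmono : ∀ i j, 1 ≤ i → i ≤ j → j ≤ k → α j ≤ α i) {i : ℕ}
    (hi1 : 1 ≤ i) (hik : i ≤ k + 1) (d : ℕ) :
    CTc k α i d = CDc k α i d + (i - 1 - d) := by
  classical
  set R := (ATset k α i).card with hR
  set t := (BDset k α i).card with ht
  have hRt : R + 1 = t + i := Rt_eq hF hmono hi1 hik
  have hRk : R ≤ k := ATcard_le i
  rcases Nat.eq_zero_or_pos d with rfl | hd
  · have hT : CTc k α i 0 = R := by
      unfold CTc
      rw [hR]
      unfold ATset
      congr 1
      apply Finset.filter_congr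
      intro x _
      simp
    have hD : CDc k α i 0 = t := by
      unfold CDc
      rw [ht]
      unfold BDset
      congr 1
      apply Finset.filter_congr
      intro x _
      simp
    omega
  · -- d ≥ 1
    have h1 : CTc k α i d = ((Finset.Icc 1 k).filter fun r =>
        (r < α r + i) ∧ d < r ∧ α (r - d) < α r + i).card := by
      unfold CTc
      congr 1
      apply Finset.filter_congr
      intro x hx
      simp only [Finset.mem_Icc] at hx
      exact and_congr_right fun _ => Tthr hmono hd hx.2
    have h2 : ((Finset.Icc 1 k).filter fun r =>
        (r < α r + i) ∧ d < r ∧ α (r - d) < α r + i).card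
        = ((Finset.Icc 1 k).filter fun s =>
        s + d ≤ k ∧ (s + d < α (s + d) + i) ∧ α s < α (s + d) + i).card := by
      apply Finset.card_bij' (fun r _ => r - d) (fun s _ => s + d)
      · intro a ha
        simp only [Finset.mem_filter, Finset.mem_Icc] at ha ⊢
        have heq : a - d + d = a := by omega
        rw [heq]
        omega
      · intro a ha
        simp only [Finset.mem_filter, Finset.mem_Icc] at ha ⊢
        have heq : a + d - d = a := by omega
        rw [heq]
        omega
      · intro a ha
        simp only [Finset.mem_filter, Finset.mem_Icc] at ha
        omega
      · intro a ha
        simp only [Finset.mem_filter, Finset.mem_Icc] at ha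
        omega
    set X := (Finset.Icc 1 k).filter fun s =>
        s + d ≤ k ∧ (s + d < α (s + d) + i) ∧ α s < α (s + d) + i with hX
    have hsplit : (X.filter fun s => s + i ≤ α s).card
        + (X.filter fun s => ¬ (s + i ≤ α s)).card = X.card :=
      Finset.card_filter_add_card_filter_not _
    have h4 : X.filter (fun s => s + i ≤ α s)
        = (Finset.Icc 1 k).filter fun s => (s + i ≤ α s) ∧ d ≤ legDval k α i s := by
      rw [hX, Finset.filter_filter]
      apply Finset.filter_congr
      intro x hx
      simp only [Finset.mem_Icc] at hx
      rw [and_congr_right (fun _ => Dthr hmono hd hx.1)]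
      constructor
      · rintro ⟨⟨hxd, hQ, hC⟩, hP2⟩
        exact ⟨hP2, hxd, hC⟩
      · rintro ⟨hP2, hxd, hC⟩
        refine ⟨⟨hxd, ?_, hC⟩, hP2⟩
        by_contra hnQ
        push_neg at hnQ
        have := factB hF hmono hx.1 hd hxd hP2 (by omega)
        omega
    have h5 : X.filter (fun s => ¬ (s + i ≤ α s)) = Finset.Icc (t + 1) (R - d) := by
      rw [hX, Finset.filter_filter]
      ext x
      simp only [Finset.mem_filter, Finset.mem_Icc]
      constructor
      · rintro ⟨⟨hx1, hxk⟩, ⟨hxd, hQ, hC⟩, hnP2⟩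
        have hxt : ¬ (x ≤ t) := fun hle =>
          hnP2 ((mem_BD_iff hmono hx1 hxk).mpr hle)
        have hxR : x + d ≤ R := (mem_AT_iff hmono (by omega) hxd).mp hQ
        omega
      · rintro ⟨hxt, hxR⟩
        have hx1 : 1 ≤ x := by omega
        have hxdR : x + d ≤ R := by omega
        have hxdk : x + d ≤ k := by omega
        have hxk : x ≤ k := by omega
        have hQ : x + d < α (x + d) + i :=
          (mem_AT_iff hmono (by omega) hxdk).mpr hxdR
        have hnP2 : ¬ (x + i ≤ α x) := by
          intro hP2
          have := (mem_BD_iff hmono hx1 hxk).mp hP2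
          omega
        have hC : α x < α (x + d) + i :=
          factA2 hF hmono hx1 hd hxdk hQ (by omega)
        exact ⟨⟨hx1, hxk⟩, ⟨hxdk, hQ, hC⟩, hnP2⟩
    have hcard5 : (X.filter fun s => ¬ (s + i ≤ α s)).card = R - d - t := by
      rw [h5, Nat.card_Icc]
      omega
    have hCD : (X.filter fun s => s + i ≤ α s).card = CDc k α i d := by
      rw [h4]; rfl
    have : CTc k α i d = X.card := by rw [h1, h2]
    omega

lemma count_step_T (hmono : ∀ i j, 1 ≤ i → i ≤ j → j ≤ k → α j ≤ α i) (i d : ℕ) :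
    CTc k α i d = ((ATset k α i).filter fun r => d = legTval k α i r).card
      + CTc k α i (d + 1) := by
  classical
  set X := (Finset.Icc 1 k).filter fun r => (r < α r + i) ∧ d ≤ legTval k α i r with hX
  have hsplit : (X.filter fun r => d = legTval k α i r).card
      + (X.filter fun r => ¬ (d = legTval k α i r)).card = X.card :=
    Finset.card_filter_add_card_filter_not _
  have h1 : X.filter (fun r => d = legTval k α i r)
      = (ATset k α i).filter fun r => d = legTval k α i r := by
    rw [hX, Finset.filter_filter]
    unfold ATset
    rw [Finset.filter_filter]
    apply Finset.filter_congr
    intro x _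
    constructor
    · rintro ⟨⟨h1, _⟩, h3⟩; exact ⟨h1, h3⟩
    · rintro ⟨h1, h3⟩; exact ⟨⟨h1, by omega⟩, h3⟩
  have h2 : X.filter (fun r => ¬ (d = legTval k α i r))
      = (Finset.Icc 1 k).filter fun r => (r < α r + i) ∧ d + 1 ≤ legTval k α i r := by
    rw [hX, Finset.filter_filter]
    apply Finset.filter_congr
    intro x _
    constructor
    · rintro ⟨⟨h1, h2⟩, h3⟩; exact ⟨h1, by omega⟩
    · rintro ⟨h1, h2⟩; exact ⟨⟨h1, by omega⟩, by omega⟩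
  unfold CTc
  rw [← hX, ← hsplit, h1, h2]

lemma count_step_D (hmono : ∀ i j, 1 ≤ i → i ≤ j → j ≤ k → α j ≤ α i) (i d : ℕ) :
    CDc k α i d = ((BDset k α i).filter fun s => d = legDval k α i s).card
      + CDc k α i (d + 1) := by
  classical
  set X := (Finset.Icc 1 k).filter fun s => (s + i ≤ α s) ∧ d ≤ legDval k α i s with hX
  have hsplit : (X.filter fun s => d = legDval k α i s).card
      + (X.filter fun s => ¬ (d = legDval k α i s)).card = X.card :=
    Finset.card_filter_add_card_filter_not _
  have h1 : X.filter (fun s => d = legDval k α i s)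
      = (BDset k α i).filter fun s => d = legDval k α i s := by
    rw [hX, Finset.filter_filter]
    unfold BDset
    rw [Finset.filter_filter]
    apply Finset.filter_congr
    intro x _
    constructor
    · rintro ⟨⟨h1, _⟩, h3⟩; exact ⟨h1, h3⟩
    · rintro ⟨h1, h3⟩; exact ⟨⟨h1, by omega⟩, h3⟩
  have h2 : X.filter (fun s => ¬ (d = legDval k α i s))
      = (Finset.Icc 1 k).filter fun s => (s + i ≤ α s) ∧ d + 1 ≤ legDval k α i s := by
    rw [hX, Finset.filter_filter]
    apply Finset.filter_congr
    intro x _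
    constructor
    · rintro ⟨⟨h1, h2⟩, h3⟩; exact ⟨h1, by omega⟩
    · rintro ⟨h1, h2⟩; exact ⟨⟨h1, by omega⟩, by omega⟩
  unfold CDc
  rw [← hX, ← hsplit, h1, h2]

/-- The core multiset identity. -/
lemma core_multiset (hmono : ∀ i j, 1 ≤ i → i ≤ j → j ≤ k → α j ≤ α i) {i : ℕ}
    (hi1 : 1 ≤ i) (hik : i ≤ k + 1) :
    ((ATset k α i).val.map (legTval k α i))
      = ((BDset k α i).val.map (legDval k α i)) + Multiset.range (i - 1) := by
  classical
  rw [Multiset.ext]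
  intro l
  rw [Multiset.count_add]
  have hT : ((ATset k α i).val.map (legTval k α i)).count l
      = ((ATset k α i).filter fun r => l = legTval k α i r).card := by
    rw [Multiset.count_map]
    rfl
  have hD : ((BDset k α i).val.map (legDval k α i)).count l
      = ((BDset k α i).filter fun s => l = legDval k α i s).card := by
    rw [Multiset.count_map]
    rfl
  have hrange : (Multiset.range (i - 1)).count l = if l < i - 1 then 1 else 0 := by
    by_cases h : l < i - 1
    · rw [if_pos h]
      exact Multiset.count_eq_one_of_mem (Multiset.nodup_range _)
        (Multiset.mem_range.mpr h)
    · rw [if_neg h]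
      exact Multiset.count_eq_zero_of_notMem (fun hc => h (Multiset.mem_range.mp hc))
  rw [hT, hD, hrange]
  have e1 := count_step_T hF hmono i l
  have e2 := count_step_D hF hmono i l
  have e3 := master hF hmono hi1 hik l
  have e4 := master hF hmono hi1 hik (l + 1)
  by_cases h : l < i - 1
  · rw [if_pos h]; omega
  · rw [if_neg h]; omega

end Master

section Geometry

lemma mem_skewD {a b : ℕ} {lo hi : ℕ → ℕ} {x : ℕ × ℕ} :
    x ∈ skewD a b lo hi ↔ a ≤ x.1 ∧ x.1 ≤ b ∧ lo x.1 ≤ x.2 ∧ x.2 ≤ hi x.1 := by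
  unfold skewD
  simp only [Finset.mem_biUnion, Finset.mem_Icc, Finset.mem_image]
  constructor
  · rintro ⟨r, ⟨h1, h2⟩, j, ⟨h3, h4⟩, rfl⟩
    exact ⟨h1, h2, h3, h4⟩
  · rintro ⟨h1, h2, h3, h4⟩
    exact ⟨x.1, ⟨h1, h2⟩, x.2, ⟨h3, h4⟩, rfl⟩

lemma arm_skewD {a b : ℕ} {lo hi : ℕ → ℕ} {r j : ℕ}
    (hmem : (r, j) ∈ skewD a b lo hi) :
    arm (skewD a b lo hi) (r, j) = hi r - j := by
  have hm := mem_skewD.mp hmem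
  simp only at hm
  unfold arm
  have hset : (skewD a b lo hi).filter (fun y => y.1 = r ∧ j < y.2)
      = (Finset.Icc (j+1) (hi r)).image (fun j' => (r, j')) := by
    ext y
    simp only [Finset.mem_filter, Finset.mem_image, Finset.mem_Icc, mem_skewD]
    constructor
    · rintro ⟨⟨h1, h2, h3, h4⟩, hy1, hy2⟩
      refine ⟨y.2, ⟨by omega, by rw [← hy1]; exact h4⟩, ?_⟩
      rw [← hy1]
    · rintro ⟨j', ⟨hj1, hj2⟩, rfl⟩
      exact ⟨⟨hm.1, hm.2.1, show lo r ≤ j' by omega, hj2⟩, rfl, show j < j' by omega⟩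
  rw [hset, Finset.card_image_of_injective _ (fun p q h => by simpa using h), Nat.card_Icc]
  omega

lemma leg_skewD {a b : ℕ} {lo hi : ℕ → ℕ} (r j : ℕ) :
    leg (skewD a b lo hi) (r, j)
      = ((Finset.Icc a b).filter fun r' => r' < r ∧ lo r' ≤ j ∧ j ≤ hi r').card := by
  unfold leg
  have hset : (skewD a b lo hi).filter (fun y => y.2 = j ∧ y.1 < r)
      = ((Finset.Icc a b).filter fun r' => r' < r ∧ lo r' ≤ j ∧ j ≤ hi r').image
          (fun r' => (r', j)) := by
    ext y
    simp only [Finset.mem_filter, Finset.mem_image, Finset.mem_Icc, mem_skewD]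
    constructor
    · rintro ⟨⟨h1, h2, h3, h4⟩, hy2, hy1⟩
      refine ⟨y.1, ⟨⟨h1, h2⟩, hy1, by rw [← hy2]; exact h3, by rw [← hy2]; exact h4⟩, ?_⟩
      rw [← hy2]
    · rintro ⟨r', ⟨⟨h1, h2⟩, h3, h4, h5⟩, rfl⟩
      exact ⟨⟨h1, h2, h4, h5⟩, rfl, h3⟩
  rw [hset, Finset.card_image_of_injective _ (fun p q h => by simpa using h)]

variable {k : ℕ} {α : ℕ → ℕ}

lemma filterT_eq (hk : 0 < k) (hmono : ∀ i j, 1 ≤ i → i ≤ j → j ≤ k → α j ≤ α i)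
    {i : ℕ} (hi1 : 1 ≤ i) (hik : i ≤ k + 1) :
    (TT (k + 1) k α).filter (fun x =>
        x.1 + x.2 ≤ k + 1 + α 1 ∧ arm (TT (k + 1) k α) x = i - 1)
      = (ATset k α i).image (fun r => (r, k + 2 - i + (α 1 - α r))) := by
  ext x
  rw [Finset.mem_filter]
  simp only [Finset.mem_filter, Finset.mem_image, ATset, Finset.mem_Icc, TT, mem_skewD]
  constructor
  · rintro ⟨⟨h1, h2, h3, h4⟩, hdiag, harm⟩
    have hα : α x.1 ≤ α 1 := hmono 1 x.1 le_rfl h1 h2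
    have harm' : k + 1 + α 1 - α x.1 - x.2 = i - 1 := by
      rw [show x = (x.1, x.2) from rfl] at harm
      rw [arm_skewD (by rw [mem_skewD]; exact ⟨h1, h2, h3, h4⟩)] at harm
      exact harm
    refine ⟨x.1, ⟨⟨h1, h2⟩, by omega⟩, ?_⟩
    have hcol : k + 2 - i + (α 1 - α x.1) = x.2 := by omega
    rw [hcol]
  · rintro ⟨r, ⟨⟨h1, h2⟩, hAT⟩, rfl⟩
    have hα : α r ≤ α 1 := hmono 1 r le_rfl h1 h2
    have hmem : ((r, k + 2 - i + (α 1 - α r)) : ℕ × ℕ) ∈ TT (k+1) k α := by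
      simp only [TT]
      rw [mem_skewD]
      exact ⟨h1, h2, show α 1 - α r + 1 ≤ k + 2 - i + (α 1 - α r) by omega,
        show k + 2 - i + (α 1 - α r) ≤ k + 1 + α 1 - α r by omega⟩
    refine ⟨by simp only [TT] at hmem; rw [mem_skewD] at hmem; exact hmem, by simp; omega, ?_⟩
    simp only [TT] at hmem ⊢
    rw [arm_skewD hmem]
    show k + 1 + α 1 - α r - (k + 2 - i + (α 1 - α r)) = i - 1
    omega

lemma mapT_eq (hk : 0 < k) (hmono : ∀ i j, 1 ≤ i → i ≤ j → j ≤ k → α j ≤ α i)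
    {i : ℕ} (hi1 : 1 ≤ i) (hik : i ≤ k + 1) :
    (((TT (k + 1) k α).filter fun x =>
        x.1 + x.2 ≤ k + 1 + α 1 ∧ arm (TT (k + 1) k α) x = i - 1)).val.map
      (fun x => leg (TT (k + 1) k α) x)
      = (ATset k α i).val.map (legTval k α i) := by
  rw [filterT_eq hk hmono hi1 hik]
  rw [Finset.image_val_of_injOn (by
    intro p hp q hq hpq
    simpa using congrArg Prod.fst hpq)]
  rw [Multiset.map_map]
  apply Multiset.map_congr rfl
  intro r hr
  have hr' : r ∈ ATset k α i := hr
  simp only [ATset, Finset.mem_filter, Finset.mem_Icc] at hr'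
  obtain ⟨⟨h1, h2⟩, hAT⟩ := hr'
  have hα : α r ≤ α 1 := hmono 1 r le_rfl h1 h2
  simp only [Function.comp_apply, TT]
  rw [leg_skewD]
  unfold legTval
  apply congrArg
  apply Finset.filter_congr
  intro x hx
  simp only [Finset.mem_Icc] at hx
  constructor
  · rintro ⟨hxr, hlo, hhi⟩
    have hαx : α x ≤ α 1 := hmono 1 x le_rfl hx.1 hx.2
    exact ⟨hxr, by omega⟩
  · rintro ⟨hxr, hax⟩
    have hαx : α x ≤ α 1 := hmono 1 x le_rfl hx.1 hx.2
    have hmxr : α r ≤ α x := hmono x r hx.1 (by omega) h2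
    exact ⟨hxr, by omega, by omega⟩

lemma filterD_eq (hk : 0 < k) (hmono : ∀ i j, 1 ≤ i → i ≤ j → j ≤ k → α j ≤ α i)
    {i : ℕ} (hi1 : 1 ≤ i) (hik : i ≤ k + 1) :
    (DD k α).filter (fun x => k + 1 < x.1 + x.2 ∧ arm (DD k α) x = i - 1)
      = (BDset k α i).image (fun s => (k + 1 - s, α s + 1 - i)) := by
  ext x
  rw [Finset.mem_filter]
  simp only [Finset.mem_filter, Finset.mem_image, BDset, Finset.mem_Icc, DD, mem_skewD]
  constructor
  · rintro ⟨⟨h1, h2, h3, h4⟩, hdiag, harm⟩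
    have harm' : α (k + 1 - x.1) - x.2 = i - 1 := by
      rw [show x = (x.1, x.2) from rfl] at harm
      rw [arm_skewD (by rw [mem_skewD]; exact ⟨h1, h2, h3, h4⟩)] at harm
      exact harm
    refine ⟨k + 1 - x.1, ⟨⟨by omega, by omega⟩, by omega⟩, ?_⟩
    have e1 : k + 1 - (k + 1 - x.1) = x.1 := by omega
    have e2 : α (k + 1 - x.1) + 1 - i = x.2 := by omega
    rw [e1, e2]
  · rintro ⟨s, ⟨⟨h1, h2⟩, hBD⟩, rfl⟩
    have e1 : k + 1 - (k + 1 - s) = s := by omega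
    have hmem : ((k + 1 - s, α s + 1 - i) : ℕ × ℕ) ∈ DD k α := by
      simp only [DD]
      rw [mem_skewD]
      refine ⟨show 1 ≤ k + 1 - s by omega, show k + 1 - s ≤ k by omega,
        show 1 ≤ α s + 1 - i by omega, ?_⟩
      show α s + 1 - i ≤ α (k + 1 - (k + 1 - s))
      rw [e1]
      omega
    refine ⟨by simp only [DD] at hmem; rw [mem_skewD] at hmem; exact hmem, by simp; omega, ?_⟩
    simp only [DD] at hmem ⊢
    rw [arm_skewD hmem]
    show α (k + 1 - (k + 1 - s)) - (α s + 1 - i) = i - 1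
    rw [e1]
    omega

lemma mapD_eq (hk : 0 < k) (hmono : ∀ i j, 1 ≤ i → i ≤ j → j ≤ k → α j ≤ α i)
    {i : ℕ} (hi1 : 1 ≤ i) (hik : i ≤ k + 1) :
    (((DD k α).filter fun x =>
        k + 1 < x.1 + x.2 ∧ arm (DD k α) x = i - 1)).val.map
      (fun x => leg (DD k α) x)
      = (BDset k α i).val.map (legDval k α i) := by
  rw [filterD_eq hk hmono hi1 hik]
  rw [Finset.image_val_of_injOn (by
    intro p hp q hq hpq
    simp only [Finset.mem_coe, BDset, Finset.mem_filter, Finset.mem_Icc] at hp hq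
    have := congrArg Prod.fst hpq
    simp only at this
    omega)]
  rw [Multiset.map_map]
  apply Multiset.map_congr rfl
  intro s hs
  have hs' : s ∈ BDset k α i := hs
  simp only [BDset, Finset.mem_filter, Finset.mem_Icc] at hs'
  obtain ⟨⟨h1, h2⟩, hBD⟩ := hs'
  simp only [Function.comp_apply, DD]
  rw [leg_skewD]
  unfold legDval
  apply Finset.card_bij' (fun r' _ => k + 1 - r') (fun s' _ => k + 1 - s')
  · intro a ha
    simp only [Finset.mem_filter, Finset.mem_Icc] at ha ⊢
    obtain ⟨⟨ha1, ha2⟩, har, hlo, hhi⟩ := ha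
    refine ⟨⟨by omega, by omega⟩, by omega, by omega⟩
  · intro a ha
    simp only [Finset.mem_filter, Finset.mem_Icc] at ha ⊢
    obtain ⟨⟨ha1, ha2⟩, has, hαs⟩ := ha
    have e : k + 1 - (k + 1 - a) = a := by omega
    rw [e]
    refine ⟨⟨by omega, by omega⟩, by omega, by omega, by omega⟩
  · intro a ha
    simp only [Finset.mem_filter, Finset.mem_Icc] at ha
    omega
  · intro a ha
    simp only [Finset.mem_filter, Finset.mem_Icc] at ha
    omega

end Geometry

/-- For `n = k+1` and `α ∈ 𝓑`: the multiset of leg lengths of the cells of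
`p(T)` with arm length `i−1` equals the disjoint union of the multiset of leg
lengths of the cells of `q(D)` with arm length `i−1` and `{0, 1, …, i−2}`. -/
theorem legs_pT_eq_legs_qD_union_range (k : ℕ) (α : ℕ → ℕ) (hk : 0 < k)
    (hα1 : α 1 ≤ k + 1) (hmono : ∀ i j, 1 ≤ i → i ≤ j → j ≤ k → α j ≤ α i)
    (hB : memB k α) (i : ℕ) (hi1 : 1 ≤ i) (hik : i ≤ k + 1) :
    (((TT (k + 1) k α).filter fun x =>
        x.1 + x.2 ≤ k + 1 + α 1 ∧ arm (TT (k + 1) k α) x = i - 1).val.map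
      fun x => leg (TT (k + 1) k α) x) =
    (((DD k α).filter fun x =>
        k + 1 < x.1 + x.2 ∧ arm (DD k α) x = i - 1).val.map
      fun x => leg (DD k α) x) + Multiset.range (i - 1) := by
  obtain ⟨m, lam, hF⟩ := hB
  rw [mapT_eq hk hmono hi1 hik, mapD_eq hk hmono hi1 hik]
  exact core_multiset hF hmono hi1 hik
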